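/- Let n ≥ 1, N ≥ 2, ε ∈ (0, 1/2). For σ ∈ {0,1}, let P_σ be the law of the random vector (S_1, …, S_N) generated as follows: draw t* uniformly from {1,…,N}; S_{t*} ~ Binomial(n, 1/2 + ε) if σ = 1 and S_{t*} ~ Binomial(n, 1/2 − ε) if σ = 0; and S_t ~ Binomial(n, 1/2) independently for all t ≠ t*. Then the Kullback–Leibler divergence satisfies D_KL(P_1 ‖ P_0) ≤ (1/2 + 2ε²)^n · 2^n / ((N−1) · (1 − 4ε²)^n). -/

import Mathlib

/-- The probability mass function of the Binomial(n, p) distribution at `k`. -/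
noncomputable def binomPMF (n : ℕ) (p : ℝ) (k : ℕ) : ℝ :=
  (n.choose k : ℝ) * p ^ k * (1 - p) ^ (n - k)

/-- The law of the vector `(S_1,…,S_N)` generated by drawing `t*` uniformly in
`{1,…,N}`, setting `S_{t*} ~ Binomial(n, p)` and `S_t ~ Binomial(n, 1/2)`
independently for `t ≠ t*`. -/
noncomputable def mixLaw (n N : ℕ) (p : ℝ) (s : Fin N → Fin (n+1)) : ℝ :=
  (1 / (N : ℝ)) * ∑ tstar : Fin N,
    binomPMF n p (s tstar) * ∏ t ∈ Finset.univ.erase tstar, binomPMF n (1/2) (s t)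

namespace Stmt5Aux

open Finset Real

noncomputable def qq (n : ℕ) (k : Fin (n+1)) : ℝ := binomPMF n (1/2) k
noncomputable def aa (n : ℕ) (ε : ℝ) (k : Fin (n+1)) : ℝ := binomPMF n (1/2 + ε) k
noncomputable def bb (n : ℕ) (ε : ℝ) (k : Fin (n+1)) : ℝ := binomPMF n (1/2 - ε) k
noncomputable def Lp (n : ℕ) (ε : ℝ) (k : Fin (n+1)) : ℝ := aa n ε k / qq n k
noncomputable def Lm (n : ℕ) (ε : ℝ) (k : Fin (n+1)) : ℝ := bb n ε k / qq n k
noncomputable def Qp (n N : ℕ) (s : Fin N → Fin (n+1)) : ℝ := ∏ t, qq n (s t)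
noncomputable def Tf (n N : ℕ) (ε : ℝ) (s : Fin N → Fin (n+1)) : ℝ := ∑ t, Lp n ε (s t)
noncomputable def Uf (n N : ℕ) (ε : ℝ) (s : Fin N → Fin (n+1)) : ℝ := ∑ t, Lm n ε (s t)
noncomputable def Vf (n N : ℕ) (ε : ℝ) (i : Fin N) (s : Fin N → Fin (n+1)) : ℝ :=
  ∑ t ∈ Finset.univ.erase i, Lm n ε (s t)
noncomputable def Wf (n N : ℕ) (ε : ℝ) (i : Fin N) (s : Fin N → Fin (n+1)) : ℝ :=
  ∑ t ∈ Finset.univ.erase i, Lp n ε (s t)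

/-- the coordinate flip fixing coordinate `i` -/
def Ff (n N : ℕ) (i : Fin N) (s : Fin N → Fin (n+1)) : Fin N → Fin (n+1) :=
  fun t => if t = i then s t else (s t).rev

lemma Ff_invol (n N : ℕ) (i : Fin N) : Function.Involutive (Ff n N i) := by
  intro s
  funext t
  simp only [Ff]
  split <;> simp [Fin.rev_rev]

section basic

variable {n : ℕ} {ε : ℝ} (hε0 : 0 < ε) (hε : ε < 1/2)

lemma binomPMF_pos {p : ℝ} (h0 : 0 < p) (h1 : p < 1) (k : Fin (n+1)) :
    0 < binomPMF n p k := by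
  unfold binomPMF
  have hc : 0 < (n.choose (k : ℕ) : ℝ) := by
    exact_mod_cast Nat.choose_pos (Fin.is_le k)
  exact mul_pos (mul_pos hc (pow_pos h0 _)) (pow_pos (by linarith) _)

include hε0 hε in
lemma aa_pos (k : Fin (n+1)) : 0 < aa n ε k :=
  binomPMF_pos (by linarith) (by linarith) k

include hε0 hε in
lemma bb_pos (k : Fin (n+1)) : 0 < bb n ε k :=
  binomPMF_pos (by linarith) (by linarith) k

lemma qq_pos (k : Fin (n+1)) : 0 < qq n k :=
  binomPMF_pos (by norm_num) (by norm_num) k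

include hε0 hε in
lemma Lp_pos (k : Fin (n+1)) : 0 < Lp n ε k :=
  div_pos (aa_pos hε0 hε k) (qq_pos k)

include hε0 hε in
lemma Lm_pos (k : Fin (n+1)) : 0 < Lm n ε k :=
  div_pos (bb_pos hε0 hε k) (qq_pos k)

lemma binomPMF_rev (p : ℝ) (k : Fin (n+1)) :
    binomPMF n p (k.rev : Fin (n+1)) = binomPMF n (1-p) k := by
  have hk : (k : ℕ) ≤ n := Fin.is_le k
  have hrev : ((k.rev : Fin (n+1)) : ℕ) = n - (k : ℕ) := by
    rw [Fin.val_rev]; omega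
  unfold binomPMF
  rw [hrev, Nat.choose_symm hk, Nat.sub_sub_self hk, sub_sub_cancel]
  ring

lemma qq_rev (k : Fin (n+1)) : qq n k.rev = qq n k := by
  unfold qq
  rw [binomPMF_rev]
  norm_num

lemma aa_rev (k : Fin (n+1)) : aa n ε k.rev = bb n ε k := by
  unfold aa bb
  rw [binomPMF_rev]
  congr 1
  ring

lemma bb_rev (k : Fin (n+1)) : bb n ε k.rev = aa n ε k := by
  unfold aa bb
  rw [binomPMF_rev]
  congr 1
  ring

lemma Lp_rev (k : Fin (n+1)) : Lp n ε k.rev = Lm n ε k := by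
  unfold Lp Lm
  rw [aa_rev, qq_rev]

lemma Lm_rev (k : Fin (n+1)) : Lm n ε k.rev = Lp n ε k := by
  unfold Lp Lm
  rw [bb_rev, qq_rev]

include hε0 hε in
lemma Lp_eq (k : Fin (n+1)) :
    Lp n ε k = (1+2*ε)^(k:ℕ) * (1-2*ε)^(n-(k:ℕ)) := by
  have h1 : (1:ℝ) - (1/2 + ε) = 1/2 - ε := by ring
  have h2 : (1:ℝ) - (1/2 : ℝ) = 1/2 := by norm_num
  have hc : (0:ℝ) < (n.choose (k : ℕ) : ℝ) := by
    exact_mod_cast Nat.choose_pos (Fin.is_le k)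
  unfold Lp aa qq binomPMF
  rw [h1, h2]
  rw [mul_assoc, mul_assoc, mul_div_mul_left _ _ hc.ne']
  rw [← div_mul_div_comm, ← div_pow, ← div_pow]
  have e1 : (1/2 + ε) / (1/2 : ℝ) = 1 + 2*ε := by ring
  have e2 : (1/2 - ε) / (1/2 : ℝ) = 1 - 2*ε := by ring
  rw [e1, e2]

include hε0 hε in
lemma Lm_eq (k : Fin (n+1)) :
    Lm n ε k = (1-2*ε)^(k:ℕ) * (1+2*ε)^(n-(k:ℕ)) := by
  have h1 : (1:ℝ) - (1/2 - ε) = 1/2 + ε := by ring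
  have h2 : (1:ℝ) - (1/2 : ℝ) = 1/2 := by norm_num
  have hc : (0:ℝ) < (n.choose (k : ℕ) : ℝ) := by
    exact_mod_cast Nat.choose_pos (Fin.is_le k)
  unfold Lm bb qq binomPMF
  rw [h1, h2]
  rw [mul_assoc, mul_assoc, mul_div_mul_left _ _ hc.ne']
  rw [← div_mul_div_comm, ← div_pow, ← div_pow]
  have e1 : (1/2 + ε) / (1/2 : ℝ) = 1 + 2*ε := by ring
  have e2 : (1/2 - ε) / (1/2 : ℝ) = 1 - 2*ε := by ring
  rw [e1, e2]

lemma sum_choose_pow (n : ℕ) (x y : ℝ) :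
    ∑ k : Fin (n+1), (n.choose (k:ℕ) : ℝ) * x^(k:ℕ) * y^(n-(k:ℕ)) = (x+y)^n := by
  rw [Fin.sum_univ_eq_sum_range (fun k => (n.choose k : ℝ) * x^k * y^(n-k))]
  rw [add_pow]
  exact Finset.sum_congr rfl (fun k _ => by ring)

lemma sum_qq (n : ℕ) : ∑ k : Fin (n+1), qq n k = 1 := by
  have h2 : (1:ℝ) - (1/2 : ℝ) = 1/2 := by norm_num
  have : ∀ k : Fin (n+1), qq n k = (n.choose (k:ℕ) : ℝ) * (1/2:ℝ)^(k:ℕ) * (1/2:ℝ)^(n-(k:ℕ)) := by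
    intro k; unfold qq binomPMF; rw [h2]
  rw [Finset.sum_congr rfl (fun k _ => this k), sum_choose_pow]
  norm_num

include hε0 hε in
lemma sum_A (n : ℕ) :
    ∑ k : Fin (n+1), qq n k * (Lp n ε k)^2 = (1 + 4*ε^2)^n := by
  have h2 : (1:ℝ) - (1/2 : ℝ) = 1/2 := by norm_num
  have key : ∀ k : Fin (n+1), qq n k * (Lp n ε k)^2
      = (n.choose (k:ℕ) : ℝ) * ((1+2*ε)^2/2)^(k:ℕ) * ((1-2*ε)^2/2)^(n-(k:ℕ)) := by
    intro k
    rw [Lp_eq hε0 hε]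
    unfold qq binomPMF
    rw [h2]
    simp only [div_pow, mul_pow, one_pow, ← pow_mul]
    ring
  rw [Finset.sum_congr rfl (fun k _ => key k), sum_choose_pow]
  congr 1
  ring

include hε0 hε in
lemma sum_B (n : ℕ) :
    ∑ k : Fin (n+1), qq n k * (1 / Lm n ε k) = (1 / (1 - 4*ε^2))^n := by
  have h2 : (1:ℝ) - (1/2 : ℝ) = 1/2 := by norm_num
  have hy : (1:ℝ) - 2*ε ≠ 0 := by nlinarith
  have hx : (1:ℝ) + 2*ε ≠ 0 := by nlinarith
  have key : ∀ k : Fin (n+1), qq n k * (1 / Lm n ε k)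
      = (n.choose (k:ℕ) : ℝ) * (1/(2*(1-2*ε)))^(k:ℕ) * (1/(2*(1+2*ε)))^(n-(k:ℕ)) := by
    intro k
    rw [Lm_eq hε0 hε]
    unfold qq binomPMF
    rw [h2]
    simp only [div_pow, mul_pow, one_pow]
    have e1 : (1-2*ε:ℝ)^(k:ℕ) ≠ 0 := pow_ne_zero _ hy
    have e2 : (1+2*ε:ℝ)^(n-(k:ℕ)) ≠ 0 := pow_ne_zero _ hx
    field_simp
  rw [Finset.sum_congr rfl (fun k _ => key k), sum_choose_pow]
  have hz : (1:ℝ) - 4*ε^2 ≠ 0 := by nlinarith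
  congr 1
  rw [div_add_div _ _ (mul_ne_zero two_ne_zero hy) (mul_ne_zero two_ne_zero hx),
    div_eq_div_iff (mul_ne_zero (mul_ne_zero two_ne_zero hy) (mul_ne_zero two_ne_zero hx)) hz]
  ring

/-- pointwise logarithm estimate -/
lemma log_pair_le {la lb v w : ℝ} (hla : 0 < la) (hlb : 0 < lb) (hv : 0 < v) (hw : 0 < w) :
    Real.log ((la+w)/(lb+v)) + Real.log ((la+v)/(lb+w)) ≤ la/v + la/w := by
  have h1 : Real.log ((la+w)/(lb+v)) + Real.log ((la+v)/(lb+w))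
      = Real.log ((la+w)/(lb+w)) + Real.log ((la+v)/(lb+v)) := by
    rw [Real.log_div (by positivity) (by positivity), Real.log_div (by positivity) (by positivity),
      Real.log_div (by positivity) (by positivity), Real.log_div (by positivity) (by positivity)]
    ring
  rw [h1]
  have key : ∀ x : ℝ, 0 < x → Real.log ((la+x)/(lb+x)) ≤ la/x := by
    intro x hx
    have h2 : Real.log ((la+x)/(lb+x)) ≤ (la+x)/(lb+x) - 1 :=
      Real.log_le_sub_one_of_pos (by positivity)
    have h3 : (la+x)/(lb+x) - 1 ≤ la/x := by
      rw [div_sub_one (by positivity), div_le_div_iff₀ (by positivity) hx]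
      nlinarith
    linarith
  linarith [key w hw, key v hv]

end basic

section main

variable {n N : ℕ} {ε : ℝ} (hε0 : 0 < ε) (hε : ε < 1/2)

/-- mixLaw in likelihood-ratio form -/
lemma mixLaw_P (s : Fin N → Fin (n+1)) :
    mixLaw n N (1/2 + ε) s = Qp n N s * Tf n N ε s / N := by
  unfold mixLaw Qp Tf Lp aa
  have key : ∀ t : Fin N,
      binomPMF n (1/2 + ε) (s t) * ∏ u ∈ Finset.univ.erase t, binomPMF n (1/2) (s u)
      = (binomPMF n (1/2 + ε) (s t) / qq n (s t)) * ∏ u, qq n (s u) := by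
    intro t
    rw [← Finset.mul_prod_erase Finset.univ (fun u => qq n (s u)) (Finset.mem_univ t)]
    have hq : qq n (s t) ≠ 0 := (qq_pos (s t)).ne'
    rw [div_mul_eq_mul_div, mul_div_assoc, mul_div_cancel_left₀ _ hq]
    rfl
  rw [Finset.sum_congr rfl (fun t _ => key t), ← Finset.sum_mul]
  ring

lemma mixLaw_M (s : Fin N → Fin (n+1)) :
    mixLaw n N (1/2 - ε) s = Qp n N s * Uf n N ε s / N := by
  unfold mixLaw Qp Uf Lm bb
  have key : ∀ t : Fin N,
      binomPMF n (1/2 - ε) (s t) * ∏ u ∈ Finset.univ.erase t, binomPMF n (1/2) (s u)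
      = (binomPMF n (1/2 - ε) (s t) / qq n (s t)) * ∏ u, qq n (s u) := by
    intro t
    rw [← Finset.mul_prod_erase Finset.univ (fun u => qq n (s u)) (Finset.mem_univ t)]
    have hq : qq n (s t) ≠ 0 := (qq_pos (s t)).ne'
    rw [div_mul_eq_mul_div, mul_div_assoc, mul_div_cancel_left₀ _ hq]
    rfl
  rw [Finset.sum_congr rfl (fun t _ => key t), ← Finset.sum_mul]
  ring

/-- invariance of the tilted sum under relabelling of coordinates -/
lemma sum_swap_eq (i τ : Fin N) :
    ∑ s : Fin N → Fin (n+1), Qp n N s * Lp n ε (s τ) * Real.log (Tf n N ε s / Uf n N ε s)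
    = ∑ s : Fin N → Fin (n+1), Qp n N s * Lp n ε (s i) * Real.log (Tf n N ε s / Uf n N ε s) := by
  classical
  let e : (Fin N → Fin (n+1)) ≃ (Fin N → Fin (n+1)) :=
    Equiv.arrowCongr (Equiv.swap i τ) (Equiv.refl (Fin (n+1)))
  refine Fintype.sum_equiv e _ _ ?_
  intro s
  have he : ∀ u, e s u = s (Equiv.swap i τ u) := fun u => rfl
  have hQ : Qp n N (e s) = Qp n N s := by
    unfold Qp
    simp only [he]
    exact Equiv.prod_comp (Equiv.swap i τ) (fun u => qq n (s u))
  have hT : Tf n N ε (e s) = Tf n N ε s := by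
    unfold Tf
    simp only [he]
    exact Equiv.sum_comp (Equiv.swap i τ) (fun u => Lp n ε (s u))
  have hU : Uf n N ε (e s) = Uf n N ε s := by
    unfold Uf
    simp only [he]
    exact Equiv.sum_comp (Equiv.swap i τ) (fun u => Lm n ε (s u))
  rw [hQ, hT, hU, he, Equiv.swap_apply_left]

/-- the flip as a permutation -/
def Fe (n N : ℕ) (i : Fin N) : Equiv.Perm (Fin N → Fin (n+1)) :=
  Function.Involutive.toPerm (Ff n N i) (Ff_invol n N i)

lemma Fe_apply (i : Fin N) (s : Fin N → Fin (n+1)) : Fe n N i s = Ff n N i s := rfl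

lemma Qp_Ff (i : Fin N) (s : Fin N → Fin (n+1)) : Qp n N (Ff n N i s) = Qp n N s := by
  unfold Qp
  refine Finset.prod_congr rfl (fun t _ => ?_)
  unfold Ff
  split
  · rfl
  · exact qq_rev _

lemma Ff_apply_self (i : Fin N) (s : Fin N → Fin (n+1)) : Ff n N i s i = s i := if_pos rfl

lemma Vf_Ff (i : Fin N) (s : Fin N → Fin (n+1)) :
    Vf n N ε i (Ff n N i s) = Wf n N ε i s := by
  unfold Vf Wf
  refine Finset.sum_congr rfl (fun t ht => ?_)
  have htne : t ≠ i := (Finset.mem_erase.mp ht).1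
  unfold Ff
  rw [if_neg htne, Lm_rev]

lemma Wf_Ff (i : Fin N) (s : Fin N → Fin (n+1)) :
    Wf n N ε i (Ff n N i s) = Vf n N ε i s := by
  unfold Vf Wf
  refine Finset.sum_congr rfl (fun t ht => ?_)
  have htne : t ≠ i := (Finset.mem_erase.mp ht).1
  unfold Ff
  rw [if_neg htne, Lp_rev]

lemma Tf_decomp (i : Fin N) (s : Fin N → Fin (n+1)) :
    Tf n N ε s = Lp n ε (s i) + Wf n N ε i s :=
  (Finset.add_sum_erase Finset.univ (fun t => Lp n ε (s t)) (Finset.mem_univ i)).symm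

lemma Uf_decomp (i : Fin N) (s : Fin N → Fin (n+1)) :
    Uf n N ε s = Lm n ε (s i) + Vf n N ε i s :=
  (Finset.add_sum_erase Finset.univ (fun t => Lm n ε (s t)) (Finset.mem_univ i)).symm

include hε0 hε in
/-- independence/factorization of the two-point moment sum -/
lemma sum_factor {i t : Fin N} (ht : t ≠ i) :
    ∑ s : Fin N → Fin (n+1), Qp n N s * (Lp n ε (s i))^2 * (1 / Lm n ε (s t))
    = (∑ k : Fin (n+1), qq n k * (Lp n ε k)^2) *
      (∑ k : Fin (n+1), qq n k * (1 / Lm n ε k)) := by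
  classical
  set g : Fin N → Fin (n+1) → ℝ :=
    fun u k => if u = i then (Lp n ε k)^2 else if u = t then 1 / Lm n ε k else 1 with hg
  set f : Fin N → Fin (n+1) → ℝ := fun u k => qq n k * g u k with hf
  have hti : t ∈ Finset.univ.erase i := Finset.mem_erase.mpr ⟨ht, Finset.mem_univ t⟩
  have step1 : ∀ s : Fin N → Fin (n+1),
      Qp n N s * (Lp n ε (s i))^2 * (1 / Lm n ε (s t)) = ∏ u, f u (s u) := by
    intro s
    have : ∏ u, f u (s u) = (∏ u, qq n (s u)) * ∏ u, g u (s u) :=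
      Finset.prod_mul_distrib
    rw [this]
    have h2 : ∏ u, g u (s u)
        = g i (s i) * (g t (s t) * ∏ u ∈ (Finset.univ.erase i).erase t, g u (s u)) := by
      rw [Finset.mul_prod_erase _ (fun u => g u (s u)) hti,
        Finset.mul_prod_erase _ (fun u => g u (s u)) (Finset.mem_univ i)]
    have h3 : ∏ u ∈ (Finset.univ.erase i).erase t, g u (s u) = 1 := by
      refine Finset.prod_eq_one (fun u hu => ?_)
      have hu1 : u ≠ t := (Finset.mem_erase.mp hu).1
      have hu2 : u ≠ i := (Finset.mem_erase.mp (Finset.mem_erase.mp hu).2).1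
      simp only [hg, if_neg hu1, if_neg hu2]
    have h4 : g i (s i) = (Lp n ε (s i))^2 := by simp only [hg, if_pos rfl]
    have h5 : g t (s t) = 1 / Lm n ε (s t) := by simp [hg, ht]
    rw [h2, h3, h4, h5]
    unfold Qp
    ring
  rw [Finset.sum_congr rfl (fun s _ => step1 s), ← Fintype.prod_sum f]
  have h2 : ∏ u, (∑ k, f u k)
      = (∑ k, f i k) * ((∑ k, f t k) * ∏ u ∈ (Finset.univ.erase i).erase t, (∑ k, f u k)) := by
    rw [Finset.mul_prod_erase _ (fun u => ∑ k, f u k) hti,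
      Finset.mul_prod_erase _ (fun u => ∑ k, f u k) (Finset.mem_univ i)]
  have h3 : ∏ u ∈ (Finset.univ.erase i).erase t, (∑ k, f u k) = 1 := by
    refine Finset.prod_eq_one (fun u hu => ?_)
    have hu1 : u ≠ t := (Finset.mem_erase.mp hu).1
    have hu2 : u ≠ i := (Finset.mem_erase.mp (Finset.mem_erase.mp hu).2).1
    simp only [hf, hg, if_neg hu1, if_neg hu2, mul_one]
    exact sum_qq n
  
  have h4 : ∑ k, f i k = ∑ k : Fin (n+1), qq n k * (Lp n ε k)^2 := by
    refine Finset.sum_congr rfl (fun k _ => ?_)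
    simp [hf, hg]
  have h5 : ∑ k, f t k = ∑ k : Fin (n+1), qq n k * (1 / Lm n ε k) := by
    refine Finset.sum_congr rfl (fun k _ => ?_)
    simp [hf, hg, ht]
  rw [h2, h3, h4, h5, mul_one]

include hε0 hε in
/-- AM-HM estimate -/
lemma inv_Vf_le (hN : 2 ≤ N) (i : Fin N) (s : Fin N → Fin (n+1)) :
    1 / Vf n N ε i s ≤ (∑ t ∈ Finset.univ.erase i, 1 / Lm n ε (s t)) / ((N:ℝ)-1)^2 := by
  classical
  have hcard : (Finset.univ.erase i).card = N - 1 := by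
    rw [Finset.card_erase_of_mem (Finset.mem_univ i), Finset.card_univ, Fintype.card_fin]
  have hne : (Finset.univ.erase i).Nonempty := by
    rw [← Finset.card_pos, hcard]; omega
  have hV : 0 < Vf n N ε i s := Finset.sum_pos (fun t _ => Lm_pos hε0 hε _) hne
  have hNR : (0:ℝ) < (N:ℝ) - 1 := by
    have : (2:ℝ) ≤ (N:ℝ) := by exact_mod_cast hN
    linarith
  have hcs := Finset.sum_mul_sq_le_sq_mul_sq (Finset.univ.erase i)
      (fun t => Real.sqrt (Lm n ε (s t))) (fun t => 1 / Real.sqrt (Lm n ε (s t)))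
  have h1 : ∀ t ∈ Finset.univ.erase i,
      Real.sqrt (Lm n ε (s t)) * (1 / Real.sqrt (Lm n ε (s t))) = 1 := by
    intro t _
    have : Real.sqrt (Lm n ε (s t)) ≠ 0 :=
      (Real.sqrt_pos.mpr (Lm_pos hε0 hε _)).ne'
    field_simp
  have h2 : ∀ t ∈ Finset.univ.erase i,
      (Real.sqrt (Lm n ε (s t)))^2 = Lm n ε (s t) := by
    intro t _
    exact Real.sq_sqrt (Lm_pos hε0 hε _).le
  have h3 : ∀ t ∈ Finset.univ.erase i,
      (1 / Real.sqrt (Lm n ε (s t)))^2 = 1 / Lm n ε (s t) := by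
    intro t _
    rw [div_pow, one_pow, Real.sq_sqrt (Lm_pos hε0 hε _).le]
  rw [Finset.sum_congr rfl h1, Finset.sum_congr rfl h2, Finset.sum_congr rfl h3,
    Finset.sum_const, hcard, nsmul_eq_mul, mul_one] at hcs
  have hcast : ((N - 1 : ℕ) : ℝ) = (N:ℝ) - 1 := by
    have h1N : (1:ℕ) ≤ N := by omega
    push_cast [Nat.cast_sub h1N]
    ring
  rw [hcast] at hcs
  have hS : 0 < ∑ t ∈ Finset.univ.erase i, 1 / Lm n ε (s t) :=
    Finset.sum_pos (fun t _ => one_div_pos.mpr (Lm_pos hε0 hε _)) hne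
  rw [div_le_div_iff₀ hV (by positivity), one_mul]
  have hVeq : Vf n N ε i s = ∑ t ∈ Finset.univ.erase i, Lm n ε (s t) := rfl
  nlinarith [hcs]

include hε0 hε in
lemma main (hN : 2 ≤ N) :
    ∑ s : Fin N → Fin (n+1),
        mixLaw n N (1/2 + ε) s *
          Real.log (mixLaw n N (1/2 + ε) s / mixLaw n N (1/2 - ε) s)
      ≤ (1/2 + 2*ε^2) ^ n * (2:ℝ) ^ n / (((N:ℝ) - 1) * (1 - 4*ε^2) ^ n) := by
  classical
  have hNpos : 0 < N := by omega
  have hN2R : (2:ℝ) ≤ (N:ℝ) := by exact_mod_cast hN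
  have hNR : (0:ℝ) < (N:ℝ) := by linarith
  have hN1 : (0:ℝ) < (N:ℝ) - 1 := by linarith
  set i0 : Fin N := ⟨0, hNpos⟩ with hi0
  have hLp : ∀ k, 0 < Lp n ε k := Lp_pos hε0 hε
  have hLm : ∀ k, 0 < Lm n ε k := Lm_pos hε0 hε
  have hQp : ∀ s : Fin N → Fin (n+1), 0 < Qp n N s :=
    fun s => Finset.prod_pos (fun t _ => qq_pos _)
  have hNe : (Finset.univ.erase i0).Nonempty := by
    rw [← Finset.card_pos, Finset.card_erase_of_mem (Finset.mem_univ _), Finset.card_univ,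
      Fintype.card_fin]
    omega
  have hV : ∀ s, 0 < Vf n N ε i0 s := fun s => Finset.sum_pos (fun t _ => hLm _) hNe
  have hW : ∀ s, 0 < Wf n N ε i0 s := fun s => Finset.sum_pos (fun t _ => hLp _) hNe
  have hT : ∀ s, 0 < Tf n N ε s :=
    fun s => Finset.sum_pos (fun t _ => hLp _) ⟨i0, Finset.mem_univ i0⟩
  have hU : ∀ s, 0 < Uf n N ε s :=
    fun s => Finset.sum_pos (fun t _ => hLm _) ⟨i0, Finset.mem_univ i0⟩
  -- Step 1 : rewrite the KL divergence in tilted form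
  have step1 : ∑ s : Fin N → Fin (n+1),
        mixLaw n N (1/2 + ε) s *
          Real.log (mixLaw n N (1/2 + ε) s / mixLaw n N (1/2 - ε) s)
      = ∑ s : Fin N → Fin (n+1),
          Qp n N s * Lp n ε (s i0) * Real.log (Tf n N ε s / Uf n N ε s) := by
    have e1 : ∀ s : Fin N → Fin (n+1),
        mixLaw n N (1/2 + ε) s *
          Real.log (mixLaw n N (1/2 + ε) s / mixLaw n N (1/2 - ε) s)
        = (1/(N:ℝ)) * (Qp n N s * Tf n N ε s * Real.log (Tf n N ε s / Uf n N ε s)) := by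
      intro s
      rw [mixLaw_P, mixLaw_M]
      have harg : Qp n N s * Tf n N ε s / N / (Qp n N s * Uf n N ε s / N)
          = Tf n N ε s / Uf n N ε s := by
        have h1 := (hQp s).ne'
        have h2 := (hU s).ne'
        have h3 := hNR.ne'
        field_simp
      rw [harg]
      ring
    rw [Finset.sum_congr rfl (fun s _ => e1 s), ← Finset.mul_sum]
    have e2 : ∀ s : Fin N → Fin (n+1),
        Qp n N s * Tf n N ε s * Real.log (Tf n N ε s / Uf n N ε s)
        = ∑ τ : Fin N, Qp n N s * Lp n ε (s τ) * Real.log (Tf n N ε s / Uf n N ε s) := by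
      intro s
      have : Tf n N ε s = ∑ τ, Lp n ε (s τ) := rfl
      rw [this, Finset.mul_sum, Finset.sum_mul]
    rw [Finset.sum_congr rfl (fun s _ => e2 s), Finset.sum_comm]
    rw [Finset.sum_congr rfl (fun τ _ => sum_swap_eq i0 τ)]
    rw [Finset.sum_const, Finset.card_univ, Fintype.card_fin, nsmul_eq_mul]
    rw [← mul_assoc, one_div_mul_cancel hNR.ne', one_mul]
  -- Step 2 : flip identities
  have step2 : ∑ s : Fin N → Fin (n+1),
        Qp n N s * Lp n ε (s i0) * Real.log (Tf n N ε s / Uf n N ε s)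
      = ∑ s : Fin N → Fin (n+1), Qp n N s * Lp n ε (s i0) *
          Real.log ((Lp n ε (s i0) + Vf n N ε i0 s) / (Lm n ε (s i0) + Wf n N ε i0 s)) := by
    refine Fintype.sum_equiv (Fe n N i0) _ _ ?_
    intro s
    rw [Fe_apply, Qp_Ff, Ff_apply_self, Vf_Ff, Wf_Ff, Tf_decomp i0 s, Uf_decomp i0 s]
  have step2' : ∑ s : Fin N → Fin (n+1),
        Qp n N s * Lp n ε (s i0) * Real.log (Tf n N ε s / Uf n N ε s)
      = ∑ s : Fin N → Fin (n+1), Qp n N s * Lp n ε (s i0) *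
          Real.log ((Lp n ε (s i0) + Wf n N ε i0 s) / (Lm n ε (s i0) + Vf n N ε i0 s)) := by
    refine Finset.sum_congr rfl (fun s _ => ?_)
    rw [Tf_decomp i0 s, Uf_decomp i0 s]
  -- Step 3 : two-point logarithmic bound
  have step3 : ∑ s : Fin N → Fin (n+1),
        Qp n N s * Lp n ε (s i0) * Real.log (Tf n N ε s / Uf n N ε s)
      ≤ ∑ s : Fin N → Fin (n+1), Qp n N s * (Lp n ε (s i0))^2 / Vf n N ε i0 s := by
    have sum2 : (∑ s : Fin N → Fin (n+1),
          Qp n N s * Lp n ε (s i0) * Real.log (Tf n N ε s / Uf n N ε s))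
        + ∑ s : Fin N → Fin (n+1),
          Qp n N s * Lp n ε (s i0) * Real.log (Tf n N ε s / Uf n N ε s)
        = ∑ s : Fin N → Fin (n+1), Qp n N s * Lp n ε (s i0) *
            (Real.log ((Lp n ε (s i0) + Wf n N ε i0 s) / (Lm n ε (s i0) + Vf n N ε i0 s))
             + Real.log ((Lp n ε (s i0) + Vf n N ε i0 s) / (Lm n ε (s i0) + Wf n N ε i0 s))) := by
      nth_rewrite 1 [step2']
      nth_rewrite 1 [step2]
      rw [← Finset.sum_add_distrib]
      exact Finset.sum_congr rfl (fun s _ => by ring)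
    have bound : ∀ s : Fin N → Fin (n+1), Qp n N s * Lp n ε (s i0) *
            (Real.log ((Lp n ε (s i0) + Wf n N ε i0 s) / (Lm n ε (s i0) + Vf n N ε i0 s))
             + Real.log ((Lp n ε (s i0) + Vf n N ε i0 s) / (Lm n ε (s i0) + Wf n N ε i0 s)))
        ≤ Qp n N s * Lp n ε (s i0) *
            (Lp n ε (s i0) / Vf n N ε i0 s + Lp n ε (s i0) / Wf n N ε i0 s) := by
      intro s
      refine mul_le_mul_of_nonneg_left ?_ (mul_pos (hQp s) (hLp _)).le
      exact log_pair_le (hLp _) (hLm _) (hV s) (hW s)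
    have eq3 : ∑ s : Fin N → Fin (n+1), Qp n N s * Lp n ε (s i0) *
            (Lp n ε (s i0) / Vf n N ε i0 s + Lp n ε (s i0) / Wf n N ε i0 s)
        = (∑ s : Fin N → Fin (n+1), Qp n N s * (Lp n ε (s i0))^2 / Vf n N ε i0 s)
          + ∑ s : Fin N → Fin (n+1), Qp n N s * (Lp n ε (s i0))^2 / Wf n N ε i0 s := by
      rw [← Finset.sum_add_distrib]
      exact Finset.sum_congr rfl (fun s _ => by ring)
    have eq4 : ∑ s : Fin N → Fin (n+1), Qp n N s * (Lp n ε (s i0))^2 / Wf n N ε i0 s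
        = ∑ s : Fin N → Fin (n+1), Qp n N s * (Lp n ε (s i0))^2 / Vf n N ε i0 s := by
      refine Fintype.sum_equiv (Fe n N i0) _ _ ?_
      intro s
      rw [Fe_apply, Qp_Ff, Ff_apply_self, Vf_Ff]
    have := Finset.sum_le_sum (fun s (_ : s ∈ Finset.univ) => bound s)
    rw [eq3, eq4] at this
    linarith [sum2, this]
  -- Step 4 : AM-HM bound
  have step4 : ∑ s : Fin N → Fin (n+1), Qp n N s * (Lp n ε (s i0))^2 / Vf n N ε i0 s
      ≤ ∑ s : Fin N → Fin (n+1), Qp n N s * (Lp n ε (s i0))^2 *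
          ((∑ t ∈ Finset.univ.erase i0, 1 / Lm n ε (s t)) / ((N:ℝ)-1)^2) := by
    refine Finset.sum_le_sum (fun s _ => ?_)
    rw [div_eq_mul_one_div (Qp n N s * (Lp n ε (s i0))^2) (Vf n N ε i0 s)]
    exact mul_le_mul_of_nonneg_left (inv_Vf_le hε0 hε hN i0 s) (mul_pos (hQp s) (pow_pos (hLp _) 2)).le
  -- Step 5 : compute the factorized sum
  have step5 : ∑ s : Fin N → Fin (n+1), Qp n N s * (Lp n ε (s i0))^2 *
          ((∑ t ∈ Finset.univ.erase i0, 1 / Lm n ε (s t)) / ((N:ℝ)-1)^2)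
      = (((N:ℝ) - 1) * ((1 + 4*ε^2)^n * (1/(1 - 4*ε^2))^n)) / ((N:ℝ)-1)^2 := by
    have e1 : ∀ s : Fin N → Fin (n+1), Qp n N s * (Lp n ε (s i0))^2 *
          ((∑ t ∈ Finset.univ.erase i0, 1 / Lm n ε (s t)) / ((N:ℝ)-1)^2)
        = (∑ t ∈ Finset.univ.erase i0,
            Qp n N s * (Lp n ε (s i0))^2 * (1 / Lm n ε (s t))) / ((N:ℝ)-1)^2 := by
      intro s
      rw [← Finset.mul_sum, mul_div_assoc]
    rw [Finset.sum_congr rfl (fun s _ => e1 s), ← Finset.sum_div, Finset.sum_comm]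
    have e2 : ∀ t ∈ Finset.univ.erase i0,
        ∑ s : Fin N → Fin (n+1), Qp n N s * (Lp n ε (s i0))^2 * (1 / Lm n ε (s t))
        = (1 + 4*ε^2)^n * (1/(1 - 4*ε^2))^n := by
      intro t ht
      rw [sum_factor hε0 hε (Finset.mem_erase.mp ht).1, sum_A hε0 hε, sum_B hε0 hε]
    rw [Finset.sum_congr rfl e2, Finset.sum_const,
      Finset.card_erase_of_mem (Finset.mem_univ _), Finset.card_univ, Fintype.card_fin,
      nsmul_eq_mul]
    have hcast : ((N - 1 : ℕ) : ℝ) = (N:ℝ) - 1 := by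
      have h1N : (1:ℕ) ≤ N := by omega
      push_cast [Nat.cast_sub h1N]
      ring
    rw [hcast]
  -- assemble
  rw [step1]
  refine le_trans step3 (le_trans step4 (le_of_eq ?_))
  rw [step5]
  have hz : (0:ℝ) < 1 - 4*ε^2 := by nlinarith
  have hzn : (1 - 4*ε^2 : ℝ)^n ≠ 0 := by positivity
  have h14 : (1 + 4*ε^2 : ℝ)^n = 2^n * (1/2 + 2*ε^2)^n := by
    rw [← mul_pow]
    congr 1
    ring
  rw [h14, div_pow, one_pow]
  rw [div_eq_div_iff (by positivity) (by positivity)]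
  field_simp
  ring
  rw [← mul_pow, inv_mul_cancel₀ (by linarith), one_pow]

end main

end Stmt5Aux

/-- the mixture KL-divergence bound at the heart of the proof of
Theorem 4.2 of the paper.  With `P_σ` the law of `(S_1,…,S_N)` where a uniformly
random coordinate is `Binomial(n, 1/2 ± ε)` and the rest are `Binomial(n, 1/2)`,
`D_KL(P_1 ‖ P_0) ≤ (1/2 + 2ε²)^n · 2^n / ((N−1)·(1−4ε²)^n`. -/
theorem stmt5 (n N : ℕ) (hn : 1 ≤ n) (hN : 2 ≤ N) (ε : ℝ) (hε0 : 0 < ε)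
    (hε : ε < 1/2) :
    ∑ s : Fin N → Fin (n+1),
        mixLaw n N (1/2 + ε) s *
          Real.log (mixLaw n N (1/2 + ε) s / mixLaw n N (1/2 - ε) s)
      ≤ (1/2 + 2*ε^2) ^ n * (2:ℝ) ^ n / (((N:ℝ) - 1) * (1 - 4*ε^2) ^ n) :=
  Stmt5Aux.main hε0 hε hN
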